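/- Every single-peaked preference profile admits a Nash-stable delegation function (an equilibrium). -/

import Mathlib

namespace LD

variable {V : Type*}

/-- Alternatives: `none` is abstention (0), `some j` means voter `j`. -/
abbrev Alt (V : Type*) := Option V

/-- A preference profile: each voter has a strict linear (total) order on alternatives. -/
def IsProfile (pref : V → Option V → Option V → Prop) : Prop :=
  ∀ i : V, IsStrictTotalOrder (Option V) (pref i)

/-- Voter `i` is an abstainer if she prefers abstention to voting. -/
def Abstainer (pref : V → Option V → Option V → Prop) (i : V) : Prop :=
  pref i none (some i)

/-- `j ∈ Acc i`: voter `i` accepts `j` as a guru. -/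
def Acc (pref : V → Option V → Option V → Prop) (i j : V) : Prop :=
  j ≠ i ∧ pref i (some j) (some i) ∧ pref i (some j) none

/-- Gurus of a delegation function: voters who vote themselves. -/
def Gurus (d : V → Option V) : Set V := {i | d i = some i}

/-- `K` is a kernel of the digraph with vertex set `S` and arc relation `A`:
independent and absorbing. -/
def Kernel (S : Set V) (A : V → V → Prop) (K : Set V) : Prop :=
  K ⊆ S ∧ (∀ i ∈ K, ∀ j ∈ K, ¬ A i j) ∧ ∀ u ∈ S, u ∉ K → ∃ k ∈ K, A u k

variable [DecidableEq V] [Fintype V]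

/-- Fuel-based iteration of the delegation function. -/
def guIter (d : V → Option V) : ℕ → V → Option V
  | 0, _ => none
  | k + 1, i =>
    match d i with
    | none => none
    | some j => if j = i then some i else guIter d k j

/-- The guru of voter `i`: the voter reached from `i` by following delegations
(`none`, i.e. abstention, if the delegations from `i` abstain or enter a cycle). -/
def gu (d : V → Option V) (i : V) : Option V :=
  guIter d (Fintype.card V + 1) i

/-- Nash-stability of a delegation function. -/
def NashStable (pref : V → Option V → Option V → Prop) (d : V → Option V) : Prop :=
  ∀ i : V, ∀ g : Option V,
    ((∃ j ∈ Gurus d, g = some j) ∨ g = none ∨ g = some i) →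
    g ≠ gu d i → pref i (gu d i) g

end LD

namespace LD

/-- Single-peaked preference profile w.r.t. the order on `Fin n`. -/
def SinglePeaked {n : ℕ} (pref : Fin n → Option (Fin n) → Option (Fin n) → Prop) : Prop :=
  ∀ i j k : Fin n, ((i < j ∧ j < k) ∨ (k < j ∧ j < i)) → pref i (some j) (some k)

end LD


namespace LDAux

variable {n : ℕ}

/-- `Chain A S t`: `t` can start a chain of kernel members in `S` covering
everything to the right of `t`. -/
inductive Chain (A : Fin n → Fin n → Prop) (S : Finset (Fin n)) : Fin n → Prop
  | term (t : Fin n) (ht : t ∈ S) (h : ∀ w ∈ S, t < w → A w t) : Chain A S t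
  | step (t t' : Fin n) (ht : t ∈ S) (hc : Chain A S t') (hlt : t < t')
      (h1 : ¬ A t t') (h2 : ¬ A t' t)
      (h3 : ∀ w ∈ S, t < w → w < t' → ¬ A w t → A w t') : Chain A S t

open Finset

theorem chain_filter {A : Fin n → Fin n → Prop} {S : Finset (Fin n)} {u t : Fin n}
    (h : Chain A S t) (hut : u ≤ t) : Chain A (S.filter (u ≤ ·)) t := by
  induction h with
  | term t ht h =>
    exact Chain.term t (mem_filter.2 ⟨ht, hut⟩) (fun w hw hlt => h w (mem_filter.1 hw).1 hlt)
  | step t t' ht hc hlt h1 h2 h3 IH =>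
    exact Chain.step t t' (mem_filter.2 ⟨ht, hut⟩) (IH (le_of_lt (lt_of_le_of_lt hut hlt)))
      hlt h1 h2 (fun w hw ha hb hc' => h3 w (mem_filter.1 hw).1 ha hb hc')

theorem chain_of_filter {A : Fin n → Fin n → Prop} {S : Finset (Fin n)} {u t : Fin n}
    (h : Chain A (S.filter (u ≤ ·)) t) : Chain A S t := by
  induction h with
  | term t ht h =>
    have htu : u ≤ t := (mem_filter.1 ht).2
    exact Chain.term t (mem_filter.1 ht).1
      (fun w hw hlt => h w (mem_filter.2 ⟨hw, le_of_lt (lt_of_le_of_lt htu hlt)⟩) hlt)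
  | step t t' ht hc hlt h1 h2 h3 IH =>
    have htu : u ≤ t := (mem_filter.1 ht).2
    exact Chain.step t t' (mem_filter.1 ht).1 IH hlt h1 h2
      (fun w hw ha hb hc' => h3 w (mem_filter.2 ⟨hw, le_of_lt (lt_of_le_of_lt htu ha)⟩) ha hb hc')

theorem chain_of_erase {A : Fin n → Fin n → Prop} {S : Finset (Fin n)} {t0 t : Fin n}
    (hacc : ∀ x ∈ S, x < t0 → A t0 x) (h : Chain A (S.erase t0) t) : Chain A S t := by
  induction h with
  | term t ht h =>
    refine Chain.term t (mem_of_mem_erase ht) (fun w hw hlt => ?_)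
    by_cases hwt : w = t0
    · subst hwt; exact hacc t (mem_of_mem_erase ht) hlt
    · exact h w (mem_erase.2 ⟨hwt, hw⟩) hlt
  | step t t' ht hc hlt h1 h2 h3 IH =>
    refine Chain.step t t' (mem_of_mem_erase ht) IH hlt h1 h2 (fun w hw ha hb hc' => ?_)
    by_cases hwt : w = t0
    · subst hwt; exact absurd (hacc t (mem_of_mem_erase ht) ha) hc'
    · exact h3 w (mem_erase.2 ⟨hwt, hw⟩) ha hb hc'

open Classical in
noncomputable def goodSet (A : Fin n → Fin n → Prop) (S : Finset (Fin n)) : Finset (Fin n) :=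
  S.filter (fun t => Chain A S t)

open Classical in
theorem mem_goodSet {A : Fin n → Fin n → Prop} {S : Finset (Fin n)} {t : Fin n} :
    t ∈ goodSet A S ↔ t ∈ S ∧ Chain A S t := by
  simp [goodSet]

theorem goodSet_nonempty (A : Fin n → Fin n → Prop) {S : Finset (Fin n)} (hS : S.Nonempty) :
    (goodSet A S).Nonempty := by
  refine ⟨S.max' hS, mem_goodSet.2 ⟨S.max'_mem hS, Chain.term _ (S.max'_mem hS) ?_⟩⟩
  intro w hw hlt
  exact absurd (S.le_max' w hw) (not_le.2 hlt)

/-- Key lemma: every point of `S` left of the minimal good point accepts it. -/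
theorem key (A : Fin n → Fin n → Prop)
    (hconvR : ∀ i j k : Fin n, i < j → j < k → A i k → A i j)
    (hconvL : ∀ i j k : Fin n, k < j → j < i → A i k → A i j) :
    ∀ (S : Finset (Fin n)) (hg : (goodSet A S).Nonempty) (u : Fin n), u ∈ S →
      u < (goodSet A S).min' hg → A u ((goodSet A S).min' hg) := by
  intro S
  induction S using Finset.strongInductionOn with
  | _ S IH =>
  intro hg u hu hlt
  by_contra hA
  set t0 := (goodSet A S).min' hg with ht0
  have ht0good : t0 ∈ goodSet A S := (goodSet A S).min'_mem hg
  have ht0S : t0 ∈ S := (mem_goodSet.1 ht0good).1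
  have ht0chain : Chain A S t0 := (mem_goodSet.1 ht0good).2
  -- Claim 1: any point of S with something of S strictly below it,
  -- lying strictly left of t0, accepts t0
  have claim1 : ∀ v ∈ S, (∃ x ∈ S, x < v) → v < t0 → A v t0 := by
    intro v hv hx hvt0
    by_contra hAv
    obtain ⟨x, hxS, hxv⟩ := hx
    set S' := S.filter (v ≤ ·) with hS'
    have hssub : S' ⊂ S := by
      refine ⟨filter_subset _ _, fun hss => ?_⟩
      have := (mem_filter.1 (hss hxS)).2
      exact absurd this (not_le.2 hxv)
    have hT0' : t0 ∈ goodSet A S' := by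
      refine mem_goodSet.2 ⟨mem_filter.2 ⟨ht0S, le_of_lt hvt0⟩, ?_⟩
      exact chain_filter ht0chain (le_of_lt hvt0)
    have hg' : (goodSet A S').Nonempty := ⟨t0, hT0'⟩
    have hmin' : (goodSet A S').min' hg' = t0 := by
      refine le_antisymm ((goodSet A S').min'_le t0 hT0') ?_
      have hmem := (goodSet A S').min'_mem hg'
      have : (goodSet A S').min' hg' ∈ goodSet A S := by
        rcases mem_goodSet.1 hmem with ⟨h1, h2⟩
        exact mem_goodSet.2 ⟨(mem_filter.1 h1).1, chain_of_filter h2⟩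
      exact (goodSet A S).min'_le _ this
    have hvS' : v ∈ S' := mem_filter.2 ⟨hv, le_refl v⟩
    have := IH S' hssub hg' v hvS' (by rw [hmin']; exact hvt0)
    rw [hmin'] at this
    exact hAv this
  -- u must be the minimum of S
  have humin : ∀ x ∈ S, u ≤ x := by
    intro x hxS
    by_contra hxu
    exact hA (claim1 u hu ⟨x, hxS, not_le.1 hxu⟩ hlt)
  by_cases hc : A t0 u
  · -- erase t0 case
    have hacc : ∀ x ∈ S, x < t0 → A t0 x := by
      intro x hx hxt0
      rcases lt_or_eq_of_le (humin x hx) with h | h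
      · exact hconvL t0 x u h hxt0 hc
      · rw [← h]; exact hc
    have ht0u : u ≠ t0 := ne_of_lt hlt
    set Sd := S.erase t0 with hSd
    have hssub : Sd ⊂ S := erase_ssubset ht0S
    have hSdne : Sd.Nonempty := ⟨u, mem_erase.2 ⟨ht0u, hu⟩⟩
    have hgd : (goodSet A Sd).Nonempty := goodSet_nonempty A hSdne
    set τ := (goodSet A Sd).min' hgd with hτ
    have hτgood : τ ∈ goodSet A Sd := (goodSet A Sd).min'_mem hgd
    have hτS : τ ∈ goodSet A S := by
      rcases mem_goodSet.1 hτgood with ⟨h1, h2⟩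
      exact mem_goodSet.2 ⟨mem_of_mem_erase h1, chain_of_erase hacc h2⟩
    have ht0τ : t0 < τ := by
      rcases lt_or_eq_of_le ((goodSet A S).min'_le τ hτS) with h | h
      · exact h
      · exact absurd h.symm (mem_erase.1 (mem_goodSet.1 hτgood).1).1
    have huSd : u ∈ Sd := mem_erase.2 ⟨ht0u, hu⟩
    have hAuτ := IH Sd hssub hgd u huSd (lt_trans hlt ht0τ)
    exact hA (hconvR u t0 τ hlt ht0τ hAuτ)
  · -- chain step case: u itself is good, contradiction
    have : Chain A S u := Chain.step u t0 hu ht0chain hlt hA hc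
      (fun w hw ha hb _ => claim1 w hw ⟨u, hu, ha⟩ hb)
    have : u ∈ goodSet A S := mem_goodSet.2 ⟨hu, this⟩
    exact absurd ((goodSet A S).min'_le u this) (not_le.2 hlt)


/-- Build a kernel "tail" from a chain. -/
theorem build {A : Fin n → Fin n → Prop}
    (hirr : ∀ i, ¬ A i i)
    (hconvR : ∀ i j k : Fin n, i < j → j < k → A i k → A i j)
    (hconvL : ∀ i j k : Fin n, k < j → j < i → A i k → A i j)
    {S : Finset (Fin n)} {t : Fin n} (h : Chain A S t) :
    ∃ K : Finset (Fin n), t ∈ K ∧ K ⊆ S ∧ (∀ k ∈ K, t ≤ k) ∧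
      (∀ k ∈ K, k ≠ t → ¬ A k t) ∧
      (∀ k ∈ K, ∀ k' ∈ K, ¬ A k k') ∧
      (∀ u ∈ S, t < u → u ∉ K → ∃ k ∈ K, A u k) := by
  induction h with
  | term t ht h =>
    refine ⟨{t}, Finset.mem_singleton_self t, by simpa using ht, ?_, ?_, ?_, ?_⟩
    · intro k hk; rw [Finset.mem_singleton.1 hk]
    · intro k hk hkt; exact absurd (Finset.mem_singleton.1 hk) hkt
    · intro k hk k' hk'
      rw [Finset.mem_singleton.1 hk, Finset.mem_singleton.1 hk']
      exact hirr t
    · intro u hu htu _; exact ⟨t, Finset.mem_singleton_self t, h u hu htu⟩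
  | step t t' ht hc hlt h1 h2 h3 IH =>
    obtain ⟨K, htK, hKS, hlb, hnotAt, hind, hcov⟩ := IH
    refine ⟨insert t K, Finset.mem_insert_self t K, ?_, ?_, ?_, ?_, ?_⟩
    · intro x hx
      rcases Finset.mem_insert.1 hx with h | h
      · rw [h]; exact ht
      · exact hKS h
    · intro k hk
      rcases Finset.mem_insert.1 hk with h | h
      · rw [h]
      · exact le_of_lt (lt_of_lt_of_le hlt (hlb k h))
    · intro k hk hkt
      rcases Finset.mem_insert.1 hk with h | h
      · exact absurd h hkt
      · -- k ∈ K, k ≠ t, show ¬ A k t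
        intro hAkt
        rcases lt_or_eq_of_le (hlb k h) with hlt' | heq
        · exact hnotAt k h (fun he => absurd (he ▸ hlt') (lt_irrefl t'))
            (hconvL k t' t hlt hlt' hAkt)
        · exact h2 (heq ▸ hAkt)
    · intro k hk k' hk'
      rcases Finset.mem_insert.1 hk with hh | hh <;>
        rcases Finset.mem_insert.1 hk' with hh' | hh'
      · rw [hh, hh']; exact hirr t
      · -- k = t, k' ∈ K : ¬ A t k'
        rw [hh]; intro hAtk'
        rcases lt_or_eq_of_le (hlb k' hh') with hlt' | heq
        · exact h1 (hconvR t t' k' hlt hlt' hAtk')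
        · exact h1 (heq ▸ hAtk')
      · -- k ∈ K, k' = t
        rw [hh']
        intro hAkt
        rcases lt_or_eq_of_le (hlb k hh) with hlt' | heq
        · exact hnotAt k hh (fun he => absurd (he ▸ hlt') (lt_irrefl t'))
            (hconvL k t' t hlt hlt' hAkt)
        · exact h2 (heq ▸ hAkt)
      · exact hind k hh k' hh'
    · intro u hu htu huK
      have hut : u ≠ t := fun he => absurd (he ▸ htu) (lt_irrefl t)
      rcases lt_trichotomy u t' with h | h | h
      · by_cases hA : A u t
        · exact ⟨t, Finset.mem_insert_self t K, hA⟩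
        · exact ⟨t', Finset.mem_insert_of_mem htK, h3 u hu htu h hA⟩
      · exact absurd (Finset.mem_insert_of_mem (h ▸ htK)) huK
      · obtain ⟨k, hk, hAk⟩ := hcov u hu h (fun hm => huK (Finset.mem_insert_of_mem hm))
        exact ⟨k, Finset.mem_insert_of_mem hk, hAk⟩

/-- Kernel existence for "interval catch" digraphs on `Fin n`. -/
theorem kernel_exists (A : Fin n → Fin n → Prop)
    (hirr : ∀ i, ¬ A i i)
    (hconvR : ∀ i j k : Fin n, i < j → j < k → A i k → A i j)
    (hconvL : ∀ i j k : Fin n, k < j → j < i → A i k → A i j)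
    (S : Finset (Fin n)) :
    ∃ K : Finset (Fin n), K ⊆ S ∧ (∀ k ∈ K, ∀ k' ∈ K, ¬ A k k') ∧
      ∀ u ∈ S, u ∉ K → ∃ k ∈ K, A u k := by
  rcases S.eq_empty_or_nonempty with rfl | hS
  · exact ⟨∅, Finset.Subset.refl _, by simp, by simp⟩
  · have hg : (goodSet A S).Nonempty := goodSet_nonempty A hS
    set t0 := (goodSet A S).min' hg with ht0
    have ht0good := (goodSet A S).min'_mem hg
    obtain ⟨K, htK, hKS, _, _, hind, hcov⟩ :=
      build hirr hconvR hconvL (mem_goodSet.1 ht0good).2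
    refine ⟨K, hKS, hind, fun u hu huK => ?_⟩
    rcases lt_trichotomy u t0 with h | h | h
    · exact ⟨t0, htK, key A hconvR hconvL S hg u hu h⟩
    · exact absurd (h ▸ htK) huK
    · exact hcov u hu h huK

end LDAux

namespace LDAux

open LD

theorem exists_best {α : Type*} (r : α → α → Prop)
    (htri : ∀ a b, r a b ∨ a = b ∨ r b a)
    (htrans : ∀ a b c, r a b → r b c → r a c)
    (s : Finset α) (hs : s.Nonempty) :
    ∃ b ∈ s, ∀ x ∈ s, x ≠ b → r b x := by
  classical
  induction s using Finset.induction_on with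
  | empty => exact absurd hs (by simp)
  | @insert a s ha IH =>
    rcases s.eq_empty_or_nonempty with rfl | hne
    · refine ⟨a, Finset.mem_insert_self a _, fun x hx hxa => ?_⟩
      rcases Finset.mem_insert.1 hx with h | h
      · exact absurd h hxa
      · exact absurd h (by simp)
    · obtain ⟨c, hc, hbest⟩ := IH hne
      rcases htri a c with h | h | h
      · refine ⟨a, Finset.mem_insert_self a _, fun x hx hxa => ?_⟩
        rcases Finset.mem_insert.1 hx with hh | hh
        · exact absurd hh hxa
        · by_cases hxc : x = c
          · rw [hxc]; exact h
          · exact htrans a c x h (hbest x hh hxc)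
      · refine ⟨c, Finset.mem_insert_of_mem hc, fun x hx hxc => ?_⟩
        rcases Finset.mem_insert.1 hx with hh | hh
        · exact absurd (hh.trans h) hxc
        · exact hbest x hh hxc
      · refine ⟨c, Finset.mem_insert_of_mem hc, fun x hx hxc => ?_⟩
        rcases Finset.mem_insert.1 hx with hh | hh
        · rw [hh]; exact h
        · exact hbest x hh hxc

variable {V : Type*} [DecidableEq V] [Fintype V]

theorem gu_of_self {d : V → Option V} {i : V} (h : d i = some i) :
    gu d i = some i := by
  simp [gu, guIter, h]

theorem gu_of_none {d : V → Option V} {i : V} (h : d i = none) :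
    gu d i = none := by
  simp [gu, guIter, h]

theorem gu_of_delegate {d : V → Option V} {i k : V} (h : d i = some k)
    (hki : k ≠ i) (hk : d k = some k) : gu d i = some k := by
  have hpos : Fintype.card V ≠ 0 :=
    Nat.pos_iff_ne_zero.mp (Fintype.card_pos_iff.mpr ⟨i⟩)
  obtain ⟨m, hm⟩ := Nat.exists_eq_succ_of_ne_zero hpos
  rw [gu, hm]
  simp [guIter, h, hki, hk]

end LDAux


open LD in
/-- every single-peaked preference profile admits a Nash-stable
delegation function (an equilibrium). -/
theorem singlePeaked_has_equilibrium {n : ℕ}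
    (pref : Fin n → Option (Fin n) → Option (Fin n) → Prop)
    (hP : IsProfile pref) (hSP : SinglePeaked pref) :
    ∃ d : Fin n → Option (Fin n), NashStable pref d := by
  classical
  have tri : ∀ i (a b : Option (Fin n)), pref i a b ∨ a = b ∨ pref i b a :=
    fun i a b => @trichotomous_of _ (pref i) (hP i).toTrichotomous a b
  have tr : ∀ i (a b c : Option (Fin n)), pref i a b → pref i b c → pref i a c :=
    fun i a b c => (hP i).toIsStrictOrder.toIsTrans.trans a b c
  set Sna : Finset (Fin n) := Finset.univ.filter (fun i => pref i (some i) none) with hSnaDef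
  have hSna : ∀ i, i ∈ Sna ↔ pref i (some i) none := by
    intro i; simp [hSnaDef]
  have hirr : ∀ i, ¬ Acc pref i i := fun i h => h.1 rfl
  have hconvR : ∀ i j k : Fin n, i < j → j < k → Acc pref i k → Acc pref i j := by
    intro i j k hij hjk h
    have sp := hSP i j k (Or.inl ⟨hij, hjk⟩)
    exact ⟨ne_of_gt hij, tr i _ _ _ sp h.2.1, tr i _ _ _ sp h.2.2⟩
  have hconvL : ∀ i j k : Fin n, k < j → j < i → Acc pref i k → Acc pref i j := by
    intro i j k hkj hji h
    have sp := hSP i j k (Or.inr ⟨hkj, hji⟩)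
    exact ⟨ne_of_lt hji, tr i _ _ _ sp h.2.1, tr i _ _ _ sp h.2.2⟩
  obtain ⟨K, hKS, hind, habs⟩ := LDAux.kernel_exists (Acc pref) hirr hconvR hconvL Sna
  -- the best alternative for each voter among gurus and abstention
  have hOne : ∀ i : Fin n, (insert none (K.image (some : Fin n → Option (Fin n)))).Nonempty :=
    fun _ => ⟨none, Finset.mem_insert_self _ _⟩
  choose b hb hbest using fun i : Fin n =>
    LDAux.exists_best (pref i) (tri i) (tr i) _ (hOne i)
  have hbcases : ∀ i, b i = none ∨ ∃ k ∈ K, b i = some k := by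
    intro i
    rcases Finset.mem_insert.1 (hb i) with h | h
    · exact Or.inl h
    · obtain ⟨k, hk, hks⟩ := Finset.mem_image.1 h
      exact Or.inr ⟨k, hk, hks.symm⟩
  set d : Fin n → Option (Fin n) := fun i => if i ∈ K then some i else b i with hd
  have hbne : ∀ i, i ∉ K → b i ≠ some i := by
    intro i hiK hbi
    rcases hbcases i with h | ⟨k, hk, hks⟩
    · rw [h] at hbi; exact nomatch hbi
    · rw [hks] at hbi
      exact hiK (Option.some_injective _ hbi ▸ hk)
  have hdK : ∀ i ∈ K, d i = some i := fun i hi => by simp [hd, hi]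
  have hdN : ∀ i, i ∉ K → d i = b i := fun i hi => by simp [hd, hi]
  have hguru : ∀ j, j ∈ Gurus d ↔ j ∈ K := by
    intro j
    constructor
    · intro hj
      have hj' : d j = some j := hj
      by_contra hjK
      rw [hdN j hjK] at hj'
      exact hbne j hjK hj'
    · intro hj
      show d j = some j
      exact hdK j hj
  have hguK : ∀ i ∈ K, gu d i = some i := fun i hi => LDAux.gu_of_self (hdK i hi)
  have hguN : ∀ i, i ∉ K → gu d i = b i := by
    intro i hiK
    rcases hbcases i with h | ⟨k, hk, hks⟩
    · rw [h]; exact LDAux.gu_of_none (by rw [hdN i hiK, h])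
    · rw [hks]
      have hki : k ≠ i := fun he => hiK (he ▸ hk)
      exact LDAux.gu_of_delegate (by rw [hdN i hiK, hks]) hki (hdK k hk)
  refine ⟨d, fun i g hcond hne => ?_⟩
  by_cases hiK : i ∈ K
  · rw [hguK i hiK] at hne ⊢
    have hiSna : pref i (some i) none := (hSna i).1 (hKS hiK)
    rcases hcond with ⟨j, hjG, rfl⟩ | rfl | rfl
    · have hjK : j ∈ K := (hguru j).1 hjG
      have hji : some j ≠ some i := hne
      rcases tri i (some i) (some j) with h | h | h
      · exact h
      · exact absurd h.symm hji
      · exact absurd ⟨fun he => hji (congrArg some he), h, tr i _ _ _ h hiSna⟩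
          (hind i hiK j hjK)
    · exact hiSna
    · exact absurd rfl hne
  · rw [hguN i hiK] at hne ⊢
    rcases hcond with ⟨j, hjG, rfl⟩ | rfl | rfl
    · have hjK : j ∈ K := (hguru j).1 hjG
      exact hbest i (some j)
        (Finset.mem_insert_of_mem (Finset.mem_image.2 ⟨j, hjK, rfl⟩)) hne
    · exact hbest i none (Finset.mem_insert_self _ _) hne
    · by_cases hiS : i ∈ Sna
      · obtain ⟨k, hkK, hAcc⟩ := habs i hiS hiK
        by_cases hbk : b i = some k
        · rw [hbk]; exact hAcc.2.1
        · exact tr i _ _ _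
            (hbest i (some k)
              (Finset.mem_insert_of_mem (Finset.mem_image.2 ⟨k, hkK, rfl⟩)) (fun he => hbk he.symm))
            hAcc.2.1
      · have hab : pref i none (some i) := by
          rcases tri i none (some i) with h | h | h
          · exact h
          · exact absurd h.symm (by simp)
          · exact absurd h (fun hh => hiS ((hSna i).2 hh))
        by_cases hbn : b i = none
        · rw [hbn]; exact hab
        · exact tr i _ _ _ (hbest i none (Finset.mem_insert_self _ _) (fun he => hbn he.symm)) hab
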